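/- Let $d_1,\dots,d_N \ge 2$ be integers, $L_N = \sum_{i=1}^N d_i - N + 1$ and $D_N = d_1 d_2 \cdots d_N$. Then for every integer $c$ with $L_N \le c \le D_N$, there exists a generalized unextendible product basis of cardinality $c$ in $\mathbb{C}^{d_1} \otimes \cdots \otimes \mathbb{C}^{d_N}$, i.e., a set of $c$ linearly independent product vectors whose orthogonal complement contains no nonzero product vector. -/

import Mathlib

open scoped InnerProductSpace

noncomputable section

/-- The multipartite Hilbert space `ℂ^{d 0} ⊗ ⋯ ⊗ ℂ^{d (N-1)}`, realized as the
Euclidean space with orthonormal basis indexed by `(i : Fin N) → Fin (d i)`. -/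
abbrev MultiSpace {N : ℕ} (d : Fin N → ℕ) : Type :=
  EuclideanSpace ℂ ((i : Fin N) → Fin (d i))

/-- A product vector `|α 0⟩ ⊗ ⋯ ⊗ |α (N-1)⟩`. -/
def IsProdVec {N : ℕ} {d : Fin N → ℕ} (v : MultiSpace d) : Prop :=
  ∃ a : (i : Fin N) → (Fin (d i) → ℂ), v = WithLp.toLp 2 (fun x => ∏ i, a i (x i))

namespace UPBAux

variable {N : ℕ} {d : Fin N → ℕ}

/-- The Bhat product vectors. -/
def u (d : Fin N → ℕ) (L : ℕ) (t : Fin L) : MultiSpace d :=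
  WithLp.toLp 2 (fun x => ((t : ℕ) : ℂ) ^ (∑ i, (x i : ℕ)))

lemma u_isProd (L : ℕ) (t : Fin L) : IsProdVec (u d L t) := by
  refine ⟨fun i k => ((t : ℕ) : ℂ) ^ (k : ℕ), ?_⟩
  rw [u]; congr 1
  funext x
  simp [u, Finset.prod_pow_eq_pow_sum]

/-- Every value `s ≤ ∑ (d i - 1)` is attained as a coordinate sum. -/
lemma exists_sum_eq (hd : ∀ i, 2 ≤ d i) :
    ∀ s, s ≤ ∑ i, (d i - 1) → ∃ x : (i : Fin N) → Fin (d i), ∑ i, (x i : ℕ) = s := by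
  intro s
  induction s with
  | zero =>
    intro _
    exact ⟨fun i => ⟨0, by have := hd i; omega⟩, by simp⟩
  | succ s ih =>
    intro hs
    obtain ⟨x, hx⟩ := ih (Nat.le_of_succ_le hs)
    have hex : ∃ i, (x i : ℕ) < d i - 1 := by
      by_contra h
      push_neg at h
      have heq : ∀ i, (x i : ℕ) = d i - 1 := by
        intro i
        have h2 := (x i).isLt
        have := h i
        omega
      have : ∑ i, (x i : ℕ) = ∑ i, (d i - 1) := Finset.sum_congr rfl fun i _ => heq i
      omega
    obtain ⟨i, hi⟩ := hex
    have hlt : (x i : ℕ) + 1 < d i := by have := hd i; omega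
    refine ⟨Function.update x i ⟨(x i : ℕ) + 1, hlt⟩, ?_⟩
    have h1 : ∑ j, ((Function.update x i ⟨(x i : ℕ) + 1, hlt⟩ j : ℕ)) =
        (x i : ℕ) + 1 + ∑ j ∈ Finset.univ.erase i, (x j : ℕ) := by
      rw [← Finset.add_sum_erase _ _ (Finset.mem_univ i)]
      congr 1
      · simp [Function.update]
      · apply Finset.sum_congr rfl
        intro j hj
        have : j ≠ i := (Finset.mem_erase.mp hj).1
        simp [Function.update, this]
    have h2 : ∑ j, (x j : ℕ) = (x i : ℕ) + ∑ j ∈ Finset.univ.erase i, (x j : ℕ) :=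
      (Finset.add_sum_erase _ _ (Finset.mem_univ i)).symm
    omega

/-- Linear independence of the Bhat vectors when `L = ∑ (d i - 1) + 1`. -/
lemma u_li (hd : ∀ i, 2 ≤ d i) :
    LinearIndependent ℂ (u d (∑ i, (d i - 1) + 1)) := by
  classical
  set L := ∑ i, (d i - 1) + 1 with hL
  -- choose, for each s : Fin L, a point with coordinate sum s
  have hsel : ∀ s : Fin L, ∃ x : (i : Fin N) → Fin (d i), ∑ i, (x i : ℕ) = (s : ℕ) := by
    intro s
    exact exists_sum_eq hd s (by have := s.isLt; omega)
  choose xsel hxsel using hsel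
  -- the linear map picking out the selected coordinates
  let E := WithLp.linearEquiv 2 ℂ (((i : Fin N) → Fin (d i)) → ℂ)
  let π : MultiSpace d →ₗ[ℂ] (Fin L → ℂ) :=
    (LinearMap.pi fun s => LinearMap.proj (xsel s)) ∘ₗ E.toLinearMap
  have hcomp : π ∘ u d L = fun t : Fin L => (Matrix.vandermonde (fun t : Fin L => ((t : ℕ) : ℂ)) t) := by
    funext t s
    simp only [Function.comp_apply, Matrix.vandermonde_apply]
    show (u d L t) (xsel s) = ((t : ℕ) : ℂ) ^ (s : ℕ)
    simp only [u, WithLp.ofLp_toLp]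
    rw [hxsel s]
  have hvdm : LinearIndependent ℂ (fun t : Fin L => (Matrix.vandermonde (fun t : Fin L => ((t : ℕ) : ℂ)) t)) := by
    show LinearIndependent ℂ (Matrix.vandermonde (fun t : Fin L => ((t : ℕ) : ℂ))).row
    rw [Matrix.linearIndependent_rows_iff_isUnit, Matrix.isUnit_iff_isUnit_det,
      isUnit_iff_ne_zero, Matrix.det_vandermonde_ne_zero_iff]
    intro a b hab
    have : ((a : ℕ) : ℂ) = ((b : ℕ) : ℂ) := hab
    exact Fin.ext (Nat.cast_injective this)
  exact LinearIndependent.of_comp π (hcomp ▸ hvdm)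

/-- Orthogonality to all Bhat vectors kills product vectors. -/
lemma entangled (hd : ∀ i, 2 ≤ d i) (φ : MultiSpace d) (hφ : IsProdVec φ)
    (h : ∀ t : Fin (∑ i, (d i - 1) + 1), ⟪u d (∑ i, (d i - 1) + 1) t, φ⟫_ℂ = 0) : φ = 0 := by
  classical
  set L := ∑ i, (d i - 1) + 1 with hL
  obtain ⟨a, rfl⟩ := hφ
  -- the polynomials
  let p : Fin N → Polynomial ℂ := fun i => ∑ k : Fin (d i), Polynomial.C (a i k) * Polynomial.X ^ (k : ℕ)
  have heval : ∀ z : ℂ, ∀ i, (p i).eval z = ∑ k : Fin (d i), a i k * z ^ (k : ℕ) := by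
    intro z i
    simp [p, Polynomial.eval_finset_sum]
  have hinner : ∀ t : Fin L, ⟪u d L t, (WithLp.toLp 2 (fun x => ∏ i, a i (x i)) : MultiSpace d)⟫_ℂ =
      ∏ i, (p i).eval ((t : ℕ) : ℂ) := by
    intro t
    rw [PiLp.inner_apply]
    have : ∀ x : (i : Fin N) → Fin (d i),
        ⟪(u d L t) x, (WithLp.toLp 2 (fun x => ∏ i, a i (x i)) : MultiSpace d) x⟫_ℂ =
        ∏ i, (a i (x i) * ((t : ℕ) : ℂ) ^ ((x i : ℕ))) := by
      intro x
      show (∏ i, a i (x i)) * (starRingEnd ℂ) ((u d L t) x) = _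
      rw [u]
      simp only [WithLp.ofLp_toLp, map_pow, Complex.conj_natCast]
      rw [← Finset.prod_pow_eq_pow_sum, Finset.prod_mul_distrib]
    rw [Finset.sum_congr rfl fun x _ => this x]
    rw [show ∀ g : ((i : Fin N) → Fin (d i)) → ℂ, ∑ x : (i : Fin N) → Fin (d i), g x
        = ∑ x ∈ Fintype.piFinset (fun i => (Finset.univ : Finset (Fin (d i)))), g x from
        fun g => by rw [Fintype.piFinset_univ]]
    rw [← Finset.prod_univ_sum (fun i => (Finset.univ : Finset (Fin (d i)))) (fun i k => a i k * ((t : ℕ) : ℂ) ^ (k : ℕ))]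
    exact Finset.prod_congr rfl fun i _ => by rw [heval]
  -- the product polynomial vanishes at L points
  have hP : (∏ i, p i) = 0 := by
    apply Polynomial.eq_zero_of_natDegree_lt_card_of_eval_eq_zero (f := fun t : Fin L => ((t : ℕ) : ℂ))
    · intro a b hab
      exact Fin.ext (Nat.cast_injective hab)
    · intro t
      rw [Polynomial.eval_prod, ← hinner t]
      exact h t
    · rw [Fintype.card_fin]
      calc (∏ i, p i).natDegree ≤ ∑ i, (p i).natDegree := Polynomial.natDegree_prod_le _ _
        _ ≤ ∑ i, (d i - 1) := by
            apply Finset.sum_le_sum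
            intro i _
            apply Polynomial.natDegree_sum_le_of_forall_le
            intro k _
            refine le_trans (Polynomial.natDegree_C_mul_le _ _) ?_
            rw [Polynomial.natDegree_X_pow]
            have := k.isLt
            omega
        _ < L := by omega
  obtain ⟨i, -, hpi⟩ := Finset.prod_eq_zero_iff.mp hP
  -- coefficients of p i are the a i k
  have hcoeff : ∀ k : Fin (d i), a i k = (p i).coeff (k : ℕ) := by
    intro k
    rw [show p i = ∑ k : Fin (d i), Polynomial.C (a i k) * Polynomial.X ^ (k : ℕ) from rfl,
      Polynomial.finset_sum_coeff]
    rw [Finset.sum_congr rfl fun k' _ => by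
      rw [Polynomial.coeff_C_mul, Polynomial.coeff_X_pow]]
    rw [Finset.sum_eq_single k]
    · simp
    · intro k' _ hk'
      have : (k' : ℕ) ≠ (k : ℕ) := fun hc => hk' (Fin.ext hc)
      simp [this, Ne.symm this]
    · simp
  have ha : ∀ k, a i k = 0 := fun k => by rw [hcoeff k, hpi]; simp
  ext x
  show ∏ j, a j (x j) = 0
  exact Finset.prod_eq_zero (Finset.mem_univ i) (ha (x i))

lemma single_isProd (x : (i : Fin N) → Fin (d i)) :
    IsProdVec (EuclideanSpace.single x (1 : ℂ) : MultiSpace d) := by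
  classical
  refine ⟨fun i k => if k = x i then 1 else 0, ?_⟩
  ext y
  rw [EuclideanSpace.single_apply]
  by_cases h : y = x
  · subst h; simp
  · have : ∃ i, y i ≠ x i := by
      by_contra hc
      push_neg at hc
      exact h (funext hc)
    obtain ⟨i, hi⟩ := this
    rw [if_neg h]
    exact (Finset.prod_eq_zero (Finset.mem_univ i) (by simp [hi])).symm

end UPBAux

/-- For all `c` with `L_N = ∑ d i - N + 1 ≤ c ≤ D_N = ∏ d i`, there exists a
generalized unextendible product basis of cardinality `c`: a linearly independent
family of product vectors whose orthogonal complement contains no nonzero product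
vector. -/
theorem generalized_UPB_all_cardinalities (N : ℕ) (hN : 0 < N) (d : Fin N → ℕ)
    (hd : ∀ i, 2 ≤ d i) (c : ℕ)
    (hc1 : (∑ i, d i) - N + 1 ≤ c) (hc2 : c ≤ ∏ i, d i) :
    ∃ ψ : Fin c → MultiSpace d,
      LinearIndependent ℂ ψ ∧
      (∀ t, IsProdVec (ψ t)) ∧
      (∀ φ : MultiSpace d, IsProdVec φ → (∀ t, ⟪ψ t, φ⟫_ℂ = 0) → φ = 0) := by
  classical
  set L := ∑ i, (d i - 1) + 1 with hLdef
  have hsumd : ∑ i, d i = ∑ i, (d i - 1) + N := by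
    have h1 : ∀ i ∈ Finset.univ, d i = (d i - 1) + 1 := fun i _ => by have := hd i; omega
    rw [Finset.sum_congr rfl h1, Finset.sum_add_distrib]
    simp
  have hLc : L ≤ c := by
    have : (∑ i, d i) - N + 1 = L := by omega
    omega
  have hu : LinearIndependent ℂ (UPBAux.u d L) := UPBAux.u_li hd
  set T : Set (MultiSpace d) :=
    Set.range (UPBAux.u d L) ∪
      Set.range (fun x => (EuclideanSpace.single x (1 : ℂ) : MultiSpace d)) with hT
  have hS : LinearIndepOn ℂ id (Set.range (UPBAux.u d L)) :=
    (linearIndepOn_id_range_iff hu.injective).mpr hu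
  have hsub : Set.range (UPBAux.u d L) ⊆ T := Set.subset_union_left
  set b := hS.extend hsub with hb
  have hbT : b ⊆ T := hS.extend_subset hsub
  have hSb : Set.range (UPBAux.u d L) ⊆ b := hS.subset_extend hsub
  have hli : LinearIndependent ℂ ((↑) : b → MultiSpace d) := hS.linearIndepOn_extend hsub
  have hspan : Submodule.span ℂ b = ⊤ := by
    rw [eq_top_iff, ← (EuclideanSpace.basisFun ((i : Fin N) → Fin (d i)) ℂ).toBasis.span_eq]
    apply Submodule.span_le.mpr
    rintro v ⟨x, rfl⟩
    refine hS.subset_span_extend hsub (Or.inr ⟨x, ?_⟩)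
    rw [OrthonormalBasis.coe_toBasis, EuclideanSpace.basisFun_apply]
  have hbfin : b.Finite := hli.setFinite
  haveI := hbfin.fintype
  let basis : Module.Basis b ℂ (MultiSpace d) :=
    Module.Basis.mk hli (by rw [Subtype.range_coe]; exact hspan.ge)
  have hcardb : hbfin.toFinset.card = ∏ i, d i := by
    have h1 : Module.finrank ℂ (MultiSpace d) = Fintype.card b :=
      Module.finrank_eq_card_basis basis
    rw [finrank_euclideanSpace] at h1
    rw [Set.Finite.card_toFinset, ← h1]
    simp
  let Sf : Finset (MultiSpace d) := Finset.image (UPBAux.u d L) Finset.univ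
  have hSfcard : Sf.card = L := by
    rw [Finset.card_image_of_injective _ hu.injective, Finset.card_univ, Fintype.card_fin]
  have hSfsub : Sf ⊆ hbfin.toFinset := by
    intro v hv
    rw [Set.Finite.mem_toFinset]
    obtain ⟨t, -, rfl⟩ := Finset.mem_image.mp hv
    exact hSb ⟨t, rfl⟩
  have hq1 : Sf.card ≤ c := by rw [hSfcard]; exact hLc
  have hq2 : c ≤ hbfin.toFinset.card := by rw [hcardb]; exact hc2
  obtain ⟨C, hSC, hCB, hCcard⟩ := Finset.exists_subsuperset_card_eq hSfsub hq1 hq2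
  let e := Finset.equivFinOfCardEq hCcard
  have hCb : (↑C : Set (MultiSpace d)) ⊆ b := by
    intro v hv
    exact (hbfin.mem_toFinset).mp (hCB hv)
  refine ⟨fun t => (e.symm t).1, ?_, ?_, ?_⟩
  · have hCli : LinearIndependent ℂ ((↑) : (↑C : Set (MultiSpace d)) → MultiSpace d) :=
      (show LinearIndepOn ℂ id b from hli).mono hCb
    exact hCli.comp e.symm e.symm.injective
  · intro t
    have hmem : (e.symm t).1 ∈ T := hbT (hCb (e.symm t).2)
    show IsProdVec (e.symm t).1
    rcases hmem with h | h
    · obtain ⟨s, hs⟩ := h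
      rw [← hs]
      exact UPBAux.u_isProd L s
    · obtain ⟨x, hx⟩ := h
      rw [← hx]
      exact UPBAux.single_isProd x
  · intro φ hφ horth
    apply UPBAux.entangled hd φ hφ
    intro s
    have hmem : UPBAux.u d L s ∈ C := hSC (Finset.mem_image.mpr ⟨s, Finset.mem_univ s, rfl⟩)
    have h2 := horth (e ⟨UPBAux.u d L s, hmem⟩)
    simpa only [Equiv.symm_apply_apply] using h2
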